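/- Let Q be an n×n real symmetric positive-semidefinite matrix with Q·𝟙 = 0 whose kernel equals the span of the all-ones vector 𝟙 (the Laplacian of a connected weighted graph), and let λ₂(Q) > 0 be its smallest nonzero eigenvalue. Let α, β, p, q, k > 0 with kp < 1 and kq > 1, let T_c > 0, L ≥ 0, ζ > 0, and let κ₁,…,κₙ satisfy κᵢ ≥ n·γ(α,β,p,q,k)/(λ₂(Q)·T_c) for all i and κ·ζ ≥ L where κ = min_i κᵢ. Then for every disturbance d : [0,∞) → ℝⁿ with ‖d(t)‖₂ ≤ L for all t, every solution x : [0,∞) → ℝⁿ of x'ᵢ(t) = κᵢ·[(α|eᵢ(t)|^p + β|eᵢ(t)|^q)^k + ζ]·sign(eᵢ(t)) + dᵢ(t), where e(t) = −Q x(t), satisfies xᵢ(t) = x_j(t) for all i, j and all t ≥ T_c. -/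

import Mathlib

open Matrix MeasureTheory Set Real

lemma realBeta_eq {a b : ℝ} (ha : 0 < a) (hb : 0 < b) :
    ∫ t in (0:ℝ)..1, t ^ (a-1) * (1-t) ^ (b-1) =
      Real.Gamma a * Real.Gamma b / Real.Gamma (a+b) := by
  have h := Complex.Gamma_mul_Gamma_eq_betaIntegral (s := a) (t := b)
    (by simpa using ha) (by simpa using hb)
  have hG : (Complex.Gamma ((a:ℂ) + b)) ≠ 0 := by
    rw [show ((a:ℂ) + b) = ((a+b : ℝ) : ℂ) by push_cast; ring, Complex.Gamma_ofReal]
    exact_mod_cast Real.Gamma_pos_of_pos (by linarith) |>.ne'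
  have hbeta : Complex.betaIntegral a b =
      ((∫ t in (0:ℝ)..1, t ^ (a-1) * (1-t) ^ (b-1) : ℝ) : ℂ) := by
    rw [Complex.betaIntegral, ← intervalIntegral.integral_ofReal]
    refine intervalIntegral.integral_congr (fun t ht => ?_)
    rw [uIcc_of_le (by norm_num)] at ht
    rw [Complex.ofReal_mul, Complex.ofReal_cpow ht.1, Complex.ofReal_cpow (by linarith [ht.2] : (0:ℝ) ≤ 1 - t)]
    push_cast
    ring_nf
  have := h
  rw [hbeta] at this
  have h2 : ((Real.Gamma a * Real.Gamma b : ℝ) : ℂ) =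
      ((Real.Gamma (a+b) * ∫ t in (0:ℝ)..1, t ^ (a-1) * (1-t) ^ (b-1) : ℝ) : ℂ) := by
    push_cast
    rw [← Complex.Gamma_ofReal, ← Complex.Gamma_ofReal, ← Complex.Gamma_ofReal] at *
    convert this using 2 <;> push_cast <;> ring
  have h3 := Complex.ofReal_injective h2
  have hGr : Real.Gamma (a+b) ≠ 0 := (Real.Gamma_pos_of_pos (by linarith)).ne'
  field_simp
  linarith [h3]

lemma betaIoi_eq {a b : ℝ} (ha : 0 < a) (hb : 0 < b)
    (hbeta : ∫ t in (0:ℝ)..1, t ^ (a-1) * (1-t) ^ (b-1) =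
      Real.Gamma a * Real.Gamma b / Real.Gamma (a+b)) :
    ∫ z in Ioi (0:ℝ), z ^ (a-1) * (1+z) ^ (-(a+b)) =
      Real.Gamma a * Real.Gamma b / Real.Gamma (a+b) := by
  set f : ℝ → ℝ := fun t => t / (1 - t) with hf
  set f' : ℝ → ℝ := fun t => ((1-t)^2)⁻¹ with hf'
  have hs : MeasurableSet (Ioo (0:ℝ) 1) := measurableSet_Ioo
  have hderiv : ∀ t ∈ Ioo (0:ℝ) 1, HasDerivWithinAt f (f' t) (Ioo (0:ℝ) 1) t := by
    intro t ht
    have h1t : (1:ℝ) - t ≠ 0 := by have := ht.2; intro h; nlinarith [ht.2]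
    have : HasDerivAt f ((1 * (1-t) - t * (0 - 1)) / (1-t)^2) t :=
      (hasDerivAt_id t).div ((hasDerivAt_const t (1:ℝ)).sub (hasDerivAt_id t)) h1t
    have h2 : (1 * (1-t) - t * (0 - 1)) / (1-t)^2 = f' t := by
      simp only [hf']
      field_simp
      ring
    rw [h2] at this
    exact this.hasDerivWithinAt
  have hinj : InjOn f (Ioo (0:ℝ) 1) := by
    intro s hsm t ht h
    have h1s : (1:ℝ) - s ≠ 0 := by intro hh; nlinarith [hsm.2]
    have h1t : (1:ℝ) - t ≠ 0 := by intro hh; nlinarith [ht.2]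
    simp only [hf] at h
    rw [div_eq_div_iff h1s h1t] at h
    nlinarith [h]
  have himg : f '' Ioo (0:ℝ) 1 = Ioi (0:ℝ) := by
    ext z
    constructor
    · rintro ⟨t, ht, rfl⟩
      exact div_pos ht.1 (by linarith [ht.2])
    · intro hz
      refine ⟨z / (1+z), ⟨div_pos hz (by linarith [mem_Ioi.mp hz]), ?_⟩, ?_⟩
      · rw [div_lt_one (by linarith [mem_Ioi.mp hz])]; linarith
      · have h1z : (1:ℝ) + z ≠ 0 := by have := mem_Ioi.mp hz; linarith
        simp only [hf]
        rw [div_eq_iff]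
        · field_simp
          ring
        · intro hh
          have : (1:ℝ) - z / (1+z) = 1/(1+z) := by field_simp; ring
          rw [this] at hh
          simp at hh
          exact h1z hh
  rw [← himg, integral_image_eq_integral_abs_deriv_smul hs hderiv hinj]
  have hcong : ∫ t in Ioo (0:ℝ) 1, |f' t| • (f t ^ (a-1) * (1 + f t) ^ (-(a+b)))
      = ∫ t in Ioo (0:ℝ) 1, t ^ (a-1) * (1-t) ^ (b-1) := by
    refine setIntegral_congr_fun hs (fun t ht => ?_)
    have ht0 : 0 < t := ht.1
    have ht1 : 0 < 1 - t := by linarith [ht.2]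
    have h1 : 1 + f t = (1-t)⁻¹ := by simp only [hf]; field_simp [ht1.ne']; ring
    have h2 : f t ^ (a-1) = t ^ (a-1) * ((1-t) ^ (a-1))⁻¹ := by
      rw [hf]
      simp only
      rw [Real.div_rpow ht0.le ht1.le, div_eq_mul_inv]
    have h3 : ((1-t)⁻¹) ^ (-(a+b)) = (1-t) ^ (a+b) := by
      rw [Real.inv_rpow ht1.le, ← Real.rpow_neg ht1.le, neg_neg]
    rw [h1, h2, h3, hf']
    simp only [smul_eq_mul]
    rw [abs_of_pos (by positivity)]
    have h4 : ((1-t)^2)⁻¹ = (1-t) ^ (-(2:ℝ)) := by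
      rw [← Real.rpow_natCast (1-t) 2, ← Real.rpow_neg ht1.le]
      norm_num
    have h5 : ((1-t) ^ (a-1))⁻¹ = (1-t) ^ (-(a-1)) := by
      rw [← Real.rpow_neg ht1.le]
    rw [h4, h5]
    rw [show t ^ (a-1) * (1-t) ^ (-(a-1)) * (1-t) ^ (a+b) = t ^ (a-1) * ((1-t) ^ (-(a-1)) * (1-t) ^ (a+b)) by ring,
      ← Real.rpow_add ht1]
    rw [show (1-t) ^ (-(2:ℝ)) * (t ^ (a-1) * (1-t) ^ (-(a-1) + (a+b))) = t ^ (a-1) * ((1-t) ^ (-(2:ℝ)) * (1-t) ^ (-(a-1) + (a+b))) by ring,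
      ← Real.rpow_add ht1]
    congr 1
    congr 1
    ring
  rw [hcong, ← integral_Ioc_eq_integral_Ioo, ← intervalIntegral.integral_of_le (by norm_num : (0:ℝ) ≤ 1)]
  exact hbeta

section
variable {α β p q k : ℝ}

lemma phi_cont (hα : 0 < α) (hβ : 0 < β) (hk : 0 < k) :
    ContinuousOn (fun u : ℝ => ((α * u ^ p + β * u ^ q) ^ k)⁻¹) (Ioi (0:ℝ)) := by
  have h1 : ContinuousOn (fun u : ℝ => α * u ^ p + β * u ^ q) (Ioi (0:ℝ)) := by
    apply ContinuousOn.add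
    · exact continuousOn_const.mul (continuousOn_id.rpow_const (fun x hx => Or.inl (ne_of_gt hx)))
    · exact continuousOn_const.mul (continuousOn_id.rpow_const (fun x hx => Or.inl (ne_of_gt hx)))
  have h2 : ∀ u ∈ Ioi (0:ℝ), α * u ^ p + β * u ^ q ≠ 0 := by
    intro u hu
    have hu0 : (0:ℝ) < u := hu
    positivity
  exact ((h1.rpow_const (fun x hx => Or.inl (h2 x hx))).inv₀
    (fun x hx => by
      have := h2 x hx
      have hx0 : (0:ℝ) < x := hx
      positivity))

lemma phi_pos (hα : 0 < α) (hβ : 0 < β) {u : ℝ} (hu : 0 < u) :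
    0 < (α * u ^ p + β * u ^ q) ^ k := by positivity

lemma key_integrable (hα : 0 < α) (hβ : 0 < β) (hp : 0 < p) (hq : 0 < q) (hk : 0 < k)
    (hkp : k * p < 1) (hkq : 1 < k * q) :
    IntegrableOn (fun u : ℝ => ((α * u ^ p + β * u ^ q) ^ k)⁻¹) (Ioi (0:ℝ)) := by
  have hmono : ∀ (c e : ℝ), 0 < c → (∀ u ∈ Ioi (0:ℝ), c * u ^ e ≤ α * u ^ p + β * u ^ q) →
      True := fun _ _ _ _ => trivial
  have key_bound : ∀ u : ℝ, 0 < u →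
      ((α * u ^ p + β * u ^ q) ^ k)⁻¹ ≤ (α ^ k)⁻¹ * u ^ (-(k*p)) := by
    intro u hu
    have h1 : α * u ^ p ≤ α * u ^ p + β * u ^ q := le_add_of_nonneg_right (by positivity)
    have h2 : (α * u ^ p) ^ k ≤ (α * u ^ p + β * u ^ q) ^ k :=
      Real.rpow_le_rpow (by positivity) h1 hk.le
    have h3 : (α * u ^ p) ^ k = α ^ k * u ^ (k * p) := by
      rw [Real.mul_rpow hα.le (Real.rpow_nonneg hu.le p), ← Real.rpow_mul hu.le]
      ring_nf
    calc ((α * u ^ p + β * u ^ q) ^ k)⁻¹ ≤ ((α * u ^ p) ^ k)⁻¹ := by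
          apply inv_anti₀ (by positivity) h2
      _ = (α ^ k)⁻¹ * u ^ (-(k*p)) := by
          rw [h3, mul_inv, ← Real.rpow_neg hu.le]
  have key_bound2 : ∀ u : ℝ, 0 < u →
      ((α * u ^ p + β * u ^ q) ^ k)⁻¹ ≤ (β ^ k)⁻¹ * u ^ (-(k*q)) := by
    intro u hu
    have h1 : β * u ^ q ≤ α * u ^ p + β * u ^ q := le_add_of_nonneg_left (by positivity)
    have h2 : (β * u ^ q) ^ k ≤ (α * u ^ p + β * u ^ q) ^ k :=
      Real.rpow_le_rpow (by positivity) h1 hk.le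
    have h3 : (β * u ^ q) ^ k = β ^ k * u ^ (k * q) := by
      rw [Real.mul_rpow hβ.le (Real.rpow_nonneg hu.le q), ← Real.rpow_mul hu.le]
      ring_nf
    calc ((α * u ^ p + β * u ^ q) ^ k)⁻¹ ≤ ((β * u ^ q) ^ k)⁻¹ := by
          apply inv_anti₀ (by positivity) h2
      _ = (β ^ k)⁻¹ * u ^ (-(k*q)) := by
          rw [h3, mul_inv, ← Real.rpow_neg hu.le]
  have hmeas : AEStronglyMeasurable (fun u : ℝ => ((α * u ^ p + β * u ^ q) ^ k)⁻¹)
      (volume.restrict (Ioi (0:ℝ))) :=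
    ((phi_cont hα hβ hk).aestronglyMeasurable measurableSet_Ioi)
  have hIoc : IntegrableOn (fun u : ℝ => ((α * u ^ p + β * u ^ q) ^ k)⁻¹) (Ioc (0:ℝ) 1) := by
    have hg : IntegrableOn (fun u : ℝ => (α ^ k)⁻¹ * u ^ (-(k*p))) (Ioc (0:ℝ) 1) := by
      apply Integrable.const_mul
      have := intervalIntegral.intervalIntegrable_rpow' (a := 0) (b := 1)
        (r := -(k*p)) (by linarith)
      rwa [intervalIntegrable_iff_integrableOn_Ioc_of_le (by norm_num)] at this
    refine Integrable.mono' hg (hmeas.mono_set Ioc_subset_Ioi_self) ?_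
    refine (ae_restrict_iff' measurableSet_Ioc).mpr (Filter.Eventually.of_forall ?_)
    intro u hu
    rw [Real.norm_eq_abs, abs_of_pos (by
      have hu0 : 0 < u := hu.1
      positivity)]
    exact key_bound u hu.1
  have hIoi : IntegrableOn (fun u : ℝ => ((α * u ^ p + β * u ^ q) ^ k)⁻¹) (Ioi (1:ℝ)) := by
    have hg : IntegrableOn (fun u : ℝ => (β ^ k)⁻¹ * u ^ (-(k*q))) (Ioi (1:ℝ)) := by
      apply Integrable.const_mul
      exact integrableOn_Ioi_rpow_of_lt (by linarith) (by norm_num)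
    refine Integrable.mono' hg (hmeas.mono_set (Ioi_subset_Ioi (by norm_num))) ?_
    refine (ae_restrict_iff' measurableSet_Ioi).mpr (Filter.Eventually.of_forall ?_)
    intro u hu
    have hu0 : (0:ℝ) < u := lt_trans one_pos hu
    rw [Real.norm_eq_abs, abs_of_pos (by positivity)]
    exact key_bound2 u hu0
  have : Ioc (0:ℝ) 1 ∪ Ioi 1 = Ioi (0:ℝ) := Ioc_union_Ioi_eq_Ioi (by norm_num)
  rw [← this]
  exact hIoc.union hIoi

end

lemma step_A {p q k a b : ℝ} (hp : 0 < p) (hq : 0 < q) (hk : 0 < k)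
    (hr : 0 < q - p) (hab : a + b = k)
    (hra : (q - p) * a = 1 - k * p)
    (hbeta : ∫ z in Ioi (0:ℝ), z ^ (a-1) * (1+z) ^ (-(a+b)) =
      Real.Gamma a * Real.Gamma b / Real.Gamma (a+b)) :
    ∫ x in Ioi (0:ℝ), ((x ^ p + x ^ q) ^ k)⁻¹ =
      Real.Gamma a * Real.Gamma b / (Real.Gamma k * (q - p)) := by
  set r := q - p with hrdef
  set g : ℝ → ℝ := fun z => r⁻¹ * (z ^ (a-1) * (1+z) ^ (-(a+b))) with hg
  have hcomp := MeasureTheory.integral_comp_rpow_Ioi g (p := r) hr.ne'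
  have hcong : ∫ x in Ioi (0:ℝ), (|r| * x ^ (r-1)) • g (x ^ r)
      = ∫ x in Ioi (0:ℝ), ((x ^ p + x ^ q) ^ k)⁻¹ := by
    refine setIntegral_congr_fun measurableSet_Ioi (fun x hx => ?_)
    have hx0 : (0:ℝ) < x := hx
    have hxr : (0:ℝ) < x ^ r := Real.rpow_pos_of_pos hx0 r
    have h1xr : (0:ℝ) < 1 + x ^ r := by linarith
    simp only [hg, smul_eq_mul]
    rw [abs_of_pos hr]
    -- (x^r)^(a-1) = x^(r*(a-1))
    rw [← Real.rpow_mul hx0.le r (a-1)]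
    -- (1+x^r)^(-(a+b)) = ((1+x^r)^k)⁻¹
    rw [hab, Real.rpow_neg h1xr.le]
    -- x^p + x^q = x^p * (1+x^r)
    have hsum : x ^ p + x ^ q = x ^ p * (1 + x ^ r) := by
      rw [mul_add, mul_one, ← Real.rpow_add hx0]
      congr 2
      rw [hrdef]; ring
    rw [hsum, Real.mul_rpow (Real.rpow_nonneg hx0.le p) h1xr.le, ← Real.rpow_mul hx0.le p k,
      mul_inv]
    have hxpk : x ^ (p * k) ≠ 0 := (Real.rpow_pos_of_pos hx0 _).ne'
    have h2 : x ^ (r - 1) * x ^ (r * (a-1)) = x ^ (-(p*k)) := by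
      rw [← Real.rpow_add hx0]
      congr 1
      nlinarith [hra]
    have h3 : (x ^ (p*k))⁻¹ = x ^ (-(p*k)) := by
      rw [← Real.rpow_neg hx0.le]
    rw [h3]
    calc r * x ^ (r-1) * (r⁻¹ * (x ^ (r*(a-1)) * ((1 + x ^ r) ^ k)⁻¹))
        = (r * r⁻¹) * ((x ^ (r-1) * x ^ (r*(a-1))) * ((1 + x ^ r) ^ k)⁻¹) := by ring
      _ = x ^ (-(p*k)) * ((1 + x ^ r) ^ k)⁻¹ := by
          rw [mul_inv_cancel₀ hr.ne', one_mul, h2]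
  rw [← hcong, hcomp, hg]
  rw [integral_const_mul, hbeta, hab, inv_mul_eq_div, div_div]

lemma key_integral {α β p q k : ℝ} (hα : 0 < α) (hβ : 0 < β) (hp : 0 < p) (hq : 0 < q)
    (hk : 0 < k) (hkp : k * p < 1) (hkq : 1 < k * q)
    (hA : ∫ x in Ioi (0:ℝ), ((x ^ p + x ^ q) ^ k)⁻¹ =
      Real.Gamma ((1 - k*p)/(q-p)) * Real.Gamma ((k*q - 1)/(q-p)) / (Real.Gamma k * (q - p))) :
    ∫ u in Ioi (0:ℝ), ((α * u ^ p + β * u ^ q) ^ k)⁻¹ =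
      Real.Gamma ((1 - k * p) / (q - p)) * Real.Gamma ((k * q - 1) / (q - p)) /
        (α ^ k * Real.Gamma k * (q - p)) * (α / β) ^ ((1 - k * p) / (q - p)) := by
  have hr : 0 < q - p := by nlinarith
  set r := q - p with hrdef
  set a := (1 - k*p)/r with hadef
  set b := (k*q - 1)/r with hbdef
  set w := α / β with hwdef
  have hw : 0 < w := div_pos hα hβ
  set c := w ^ r⁻¹ with hcdef
  have hc : 0 < c := Real.rpow_pos_of_pos hw _
  have hkey : ∀ x ∈ Ioi (0:ℝ), ((α * (c*x) ^ p + β * (c*x) ^ q) ^ k)⁻¹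
      = ((β * c ^ q) ^ k)⁻¹ * ((x ^ p + x ^ q) ^ k)⁻¹ := by
    intro x hx
    have hx0 : (0:ℝ) < x := hx
    have hcr : c ^ r = w := by
      rw [hcdef, ← Real.rpow_mul hw.le, inv_mul_cancel₀ hr.ne', Real.rpow_one]
    have hcq : α * c ^ p = β * c ^ q := by
      have h : c ^ q = c ^ p * c ^ r := by
        rw [← Real.rpow_add hc]; congr 1; rw [hrdef]; ring
      rw [h, hcr, hwdef]
      field_simp
    have h1 : α * (c*x) ^ p + β * (c*x) ^ q = (β * c ^ q) * (x ^ p + x ^ q) := by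
      rw [Real.mul_rpow hc.le hx0.le, Real.mul_rpow hc.le hx0.le]
      rw [show α * (c ^ p * x ^ p) = (α * c ^ p) * x ^ p by ring, hcq]
      ring
    rw [h1, Real.mul_rpow (by positivity) (by positivity), mul_inv]
  have hcomp' : (∫ x in Ioi (0:ℝ), ((α * (c*x) ^ p + β * (c*x) ^ q) ^ k)⁻¹)
      = c⁻¹ • ∫ u in Ioi (0:ℝ), ((α * u ^ p + β * u ^ q) ^ k)⁻¹ := by
    have hcomp := MeasureTheory.integral_comp_mul_left_Ioi
      (fun u => ((α * u ^ p + β * u ^ q) ^ k)⁻¹) 0 hc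
    rw [mul_zero] at hcomp
    exact hcomp
  have h2 : (∫ x in Ioi (0:ℝ), ((α * (c*x) ^ p + β * (c*x) ^ q) ^ k)⁻¹)
      = ((β * c ^ q) ^ k)⁻¹ * (Real.Gamma a * Real.Gamma b / (Real.Gamma k * r)) := by
    rw [← hA, ← integral_const_mul]
    exact setIntegral_congr_fun measurableSet_Ioi hkey
  have h3 : (∫ u in Ioi (0:ℝ), ((α * u ^ p + β * u ^ q) ^ k)⁻¹)
      = c * (((β * c ^ q) ^ k)⁻¹ * (Real.Gamma a * Real.Gamma b / (Real.Gamma k * r))) := by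
    rw [← h2, hcomp', smul_eq_mul, ← mul_assoc, mul_inv_cancel₀ hc.ne', one_mul]
  -- constant computation
  have hconst : c * ((β * c ^ q) ^ k)⁻¹ = (α ^ k)⁻¹ * w ^ a := by
    have e1 : (β * c ^ q) ^ k = β ^ k * w ^ (r⁻¹ * q * k) := by
      rw [Real.mul_rpow hβ.le (by positivity), hcdef]
      rw [← Real.rpow_mul hw.le]
      try rw [← Real.rpow_mul hw.le]
      try ring_nf
    have e2 : c * (w ^ (r⁻¹ * q * k))⁻¹ = w ^ a * w ^ (-k) := by
      rw [hcdef, ← Real.rpow_neg hw.le, ← Real.rpow_add hw, ← Real.rpow_add hw]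
      congr 1
      rw [hadef, hrdef]
      field_simp [show q - p ≠ 0 from hr.ne']
      ring
    have e3 : w ^ (-k) = β ^ k * (α ^ k)⁻¹ := by
      rw [Real.rpow_neg hw.le, hwdef, Real.div_rpow hα.le hβ.le]
      rw [inv_div, div_eq_mul_inv]
    calc c * ((β * c ^ q) ^ k)⁻¹ = (c * (w ^ (r⁻¹ * q * k))⁻¹) * (β ^ k)⁻¹ := by
          rw [e1, mul_inv]; ring
      _ = w ^ a * (w ^ (-k) * (β ^ k)⁻¹) := by rw [e2]; ring
      _ = w ^ a * ((β ^ k * (α ^ k)⁻¹) * (β ^ k)⁻¹) := by rw [e3]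
      _ = w ^ a * ((α ^ k)⁻¹ * (β ^ k * (β ^ k)⁻¹)) := by ring
      _ = (α ^ k)⁻¹ * w ^ a := by
          rw [mul_inv_cancel₀ (by positivity : (β:ℝ) ^ k ≠ 0), mul_one]; ring
  rw [h3, ← mul_assoc, hconst]
  rw [div_eq_mul_inv, div_eq_mul_inv, mul_inv, mul_inv]
  ring

lemma spectral_ineq {n : ℕ} {Q : Matrix (Fin n) (Fin n) ℝ}
    (hQpsd : Q.PosSemidef) {lam2 : ℝ} (hlam2pos : 0 < lam2)
    (hlam2min : ∀ μ : ℝ, μ ≠ 0 → (∃ v : Fin n → ℝ, v ≠ 0 ∧ Q.mulVec v = μ • v) → lam2 ≤ μ)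
    (v : Fin n → ℝ) :
    lam2 * (v ⬝ᵥ Q.mulVec v) ≤ (Q.mulVec v) ⬝ᵥ (Q.mulVec v) := by
  classical
  have hH : Q.IsHermitian := hQpsd.isHermitian
  set U : Matrix (Fin n) (Fin n) ℝ := (hH.eigenvectorUnitary : Matrix (Fin n) (Fin n) ℝ) with hU
  set μ : Fin n → ℝ := hH.eigenvalues with hμ
  have hsU : star U = Uᵀ := by
    ext i j
    simp [Matrix.star_apply]
  have hUtU : Uᵀ * U = 1 := by
    rw [← hsU]
    exact Unitary.coe_star_mul_self hH.eigenvectorUnitary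
  have hspec : Q = U * Matrix.diagonal μ * Uᵀ := by
    have := hH.spectral_theorem
    rw [Unitary.conjStarAlgAut_apply, ← hU, hsU] at this
    exact this
  set y : Fin n → ℝ := Uᵀ.mulVec v with hy
  have hmove : ∀ a z : Fin n → ℝ, a ⬝ᵥ (U.mulVec z) = (Uᵀ.mulVec a) ⬝ᵥ z := by
    intro a z
    rw [Matrix.dotProduct_mulVec, Matrix.mulVec_transpose]
  have h1 : v ⬝ᵥ Q.mulVec v = ∑ j, μ j * y j ^ 2 := by
    rw [hspec, ← Matrix.mulVec_mulVec, ← Matrix.mulVec_mulVec, hmove, ← hy]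
    rw [dotProduct, Finset.sum_congr rfl (fun j _ => ?_)]
    rw [Matrix.mulVec_diagonal]
    ring
  have h2 : (Q.mulVec v) ⬝ᵥ (Q.mulVec v) = ∑ j, (μ j)^2 * y j ^ 2 := by
    rw [hspec, ← Matrix.mulVec_mulVec, ← Matrix.mulVec_mulVec, ← hy]
    set z : Fin n → ℝ := (Matrix.diagonal μ).mulVec y with hz
    rw [hmove, Matrix.mulVec_mulVec, hUtU, Matrix.one_mulVec]
    rw [dotProduct, Finset.sum_congr rfl (fun j _ => ?_)]
    rw [hz, Matrix.mulVec_diagonal]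
    ring
  have hμfact : ∀ j, μ j = 0 ∨ lam2 ≤ μ j := by
    intro j
    by_cases h : μ j = 0
    · exact Or.inl h
    · right
      refine hlam2min (μ j) h ⟨⇑(hH.eigenvectorBasis j), ?_, hH.mulVec_eigenvectorBasis j⟩
      intro hzero
      apply (hH.eigenvectorBasis).orthonormal.ne_zero j
      have h0 := congrArg (WithLp.equiv 2 ((i : Fin n) → ℝ)).symm hzero
      simpa using h0
  have hμnn : ∀ j, 0 ≤ μ j := hQpsd.eigenvalues_nonneg
  rw [h1, h2, Finset.mul_sum]
  apply Finset.sum_le_sum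
  intro j _
  rcases hμfact j with h | h
  · simp [h]
  · nlinarith [sq_nonneg (y j), hμnn j,
      mul_nonneg (mul_nonneg (sub_nonneg.mpr h) (hμnn j)) (sq_nonneg (y j))]

lemma hasDerivAt_quadForm {n : ℕ} (Q : Matrix (Fin n) (Fin n) ℝ) (hQsymm : Q.IsSymm)
    (x : ℝ → Fin n → ℝ) (x' : Fin n → ℝ) (t : ℝ) (hx : HasDerivAt x x' t) :
    HasDerivAt (fun s => (x s) ⬝ᵥ Q.mulVec (x s)) (2 * ((Q.mulVec (x t)) ⬝ᵥ x')) t := by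
  have hxi : ∀ i, HasDerivAt (fun s => x s i) (x' i) t := by
    intro i
    exact (hasDerivAt_pi.mp hx) i
  have hsum : HasDerivAt (fun s => ∑ i, ∑ j, Q i j * (x s i * x s j))
      (∑ i, ∑ j, Q i j * (x' i * x t j + x t i * x' j)) t := by
    apply HasDerivAt.fun_sum
    intro i _
    apply HasDerivAt.fun_sum
    intro j _
    exact ((hxi i).mul (hxi j)).const_mul _
  have hfun : (fun s => (x s) ⬝ᵥ Q.mulVec (x s)) = (fun s => ∑ i, ∑ j, Q i j * (x s i * x s j)) := by
    funext s
    rw [dotProduct]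
    apply Finset.sum_congr rfl
    intro i _
    rw [Matrix.mulVec, dotProduct, Finset.mul_sum]
    apply Finset.sum_congr rfl
    intro j _
    ring
  have hval : (∑ i, ∑ j, Q i j * (x' i * x t j + x t i * x' j))
      = 2 * ((Q.mulVec (x t)) ⬝ᵥ x') := by
    have e1 : (∑ i, ∑ j, Q i j * (x' i * x t j + x t i * x' j))
        = (∑ i, ∑ j, Q i j * (x' i * x t j)) + (∑ i, ∑ j, Q i j * (x t i * x' j)) := by
      rw [← Finset.sum_add_distrib]
      apply Finset.sum_congr rfl
      intro i _
      rw [← Finset.sum_add_distrib]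
      apply Finset.sum_congr rfl
      intro j _
      ring
    have hsym : ∀ a b, Q a b = Q b a := by
      intro a b
      conv_lhs => rw [← hQsymm]
      exact Matrix.transpose_apply Q a b
    have e2 : (∑ i, ∑ j, Q i j * (x' i * x t j)) = (Q.mulVec (x t)) ⬝ᵥ x' := by
      rw [dotProduct]
      apply Finset.sum_congr rfl
      intro i _
      rw [Matrix.mulVec, dotProduct, Finset.sum_mul]
      apply Finset.sum_congr rfl
      intro j _
      ring
    have e3 : (∑ i, ∑ j, Q i j * (x t i * x' j)) = (Q.mulVec (x t)) ⬝ᵥ x' := by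
      rw [Finset.sum_comm, dotProduct]
      apply Finset.sum_congr rfl
      intro i _
      rw [Matrix.mulVec, dotProduct, Finset.sum_mul]
      apply Finset.sum_congr rfl
      intro j _
      rw [hsym j i]
      ring
    rw [e1, e2, e3]
    ring
  rw [hfun, ← hval]
  exact hsum

lemma sign_mul_self_neg (a : ℝ) : a * Real.sign (-a) = -|a| := by
  rcases lt_trichotomy a 0 with h | h | h
  · rw [Real.sign_of_pos (by linarith : (0:ℝ) < -a), abs_of_neg h]
    ring
  · simp [h]
  · rw [Real.sign_of_neg (by linarith : -a < 0), abs_of_pos h]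
    ring

lemma sqrt_dot_le_sum_abs {n : ℕ} (w : Fin n → ℝ) :
    Real.sqrt (w ⬝ᵥ w) ≤ ∑ i, |w i| := by
  rw [show w ⬝ᵥ w = ∑ i, |w i| ^ 2 from by
    simp [dotProduct, sq_abs, sq]]
  refine Real.sqrt_le_sqrt (Finset.sum_sq_le_sq_sum_of_nonneg (fun i _ => abs_nonneg _)) |>.trans ?_
  rw [Real.sqrt_sq (Finset.sum_nonneg (fun i _ => abs_nonneg _))]

lemma dot_le_sqrt_mul_sqrt {n : ℕ} (w dv : Fin n → ℝ) :
    w ⬝ᵥ dv ≤ Real.sqrt (w ⬝ᵥ w) * Real.sqrt (dv ⬝ᵥ dv) := by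
  have h := Finset.sum_mul_sq_le_sq_mul_sq Finset.univ w dv
  have hww : (0:ℝ) ≤ w ⬝ᵥ w := by
    simp only [dotProduct]
    exact Finset.sum_nonneg (fun i _ => mul_self_nonneg _)
  have hdd : (0:ℝ) ≤ dv ⬝ᵥ dv := by
    simp only [dotProduct]
    exact Finset.sum_nonneg (fun i _ => mul_self_nonneg _)
  calc w ⬝ᵥ dv ≤ |w ⬝ᵥ dv| := le_abs_self _
    _ = Real.sqrt ((w ⬝ᵥ dv) ^ 2) := (Real.sqrt_sq_eq_abs _).symm
    _ ≤ Real.sqrt ((w ⬝ᵥ w) * (dv ⬝ᵥ dv)) := by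
        apply Real.sqrt_le_sqrt
        simpa [dotProduct, sq] using h
    _ = Real.sqrt (w ⬝ᵥ w) * Real.sqrt (dv ⬝ᵥ dv) := Real.sqrt_mul hww _

lemma dot_bound {n : ℕ} (w dv κv : Fin n → ℝ) {α β p q k ζ L : ℝ}
    (hκζ : ∀ i, L ≤ κv i * ζ) (hκpos : ∀ i, 0 < κv i) (hζ : 0 < ζ)
    (hd : Real.sqrt (dv ⬝ᵥ dv) ≤ L) :
    w ⬝ᵥ (fun i => κv i * ((α * |-(w i)| ^ p + β * |-(w i)| ^ q) ^ k + ζ) * Real.sign (-(w i)) + dv i)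
      ≤ - ∑ i, κv i * ((α * |w i| ^ p + β * |w i| ^ q) ^ k) * |w i| := by
  have expand : w ⬝ᵥ (fun i => κv i * ((α * |-(w i)| ^ p + β * |-(w i)| ^ q) ^ k + ζ) * Real.sign (-(w i)) + dv i)
      = (∑ i, -(κv i * ((α * |w i| ^ p + β * |w i| ^ q) ^ k + ζ) * |w i|)) + w ⬝ᵥ dv := by
    simp only [dotProduct]
    rw [← Finset.sum_add_distrib]
    apply Finset.sum_congr rfl
    intro i _
    have h1 : w i * (κv i * ((α * |-(w i)| ^ p + β * |-(w i)| ^ q) ^ k + ζ) * Real.sign (-(w i)))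
        = κv i * ((α * |w i| ^ p + β * |w i| ^ q) ^ k + ζ) * (w i * Real.sign (-(w i))) := by
      rw [abs_neg]
      ring
    rw [mul_add, h1, sign_mul_self_neg]
    ring
  rw [expand]
  have hwd : w ⬝ᵥ dv ≤ ∑ i, κv i * ζ * |w i| := by
    calc w ⬝ᵥ dv ≤ Real.sqrt (w ⬝ᵥ w) * Real.sqrt (dv ⬝ᵥ dv) := dot_le_sqrt_mul_sqrt w dv
      _ ≤ (∑ i, |w i|) * L := by
          apply mul_le_mul (sqrt_dot_le_sum_abs w) hd (Real.sqrt_nonneg _)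
          exact Finset.sum_nonneg (fun i _ => abs_nonneg _)
      _ = ∑ i, |w i| * L := by rw [Finset.sum_mul]
      _ ≤ ∑ i, κv i * ζ * |w i| := by
          apply Finset.sum_le_sum
          intro i _
          calc |w i| * L ≤ |w i| * (κv i * ζ) :=
                mul_le_mul_of_nonneg_left (hκζ i) (abs_nonneg _)
            _ = κv i * ζ * |w i| := by ring
  have : (∑ i, -(κv i * ((α * |w i| ^ p + β * |w i| ^ q) ^ k + ζ) * |w i|)) + ∑ i, κv i * ζ * |w i|
      = - ∑ i, κv i * ((α * |w i| ^ p + β * |w i| ^ q) ^ k) * |w i| := by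
    rw [← Finset.sum_neg_distrib, ← Finset.sum_add_distrib]
    apply Finset.sum_congr rfl
    intro i _
    ring
  linarith [this, hwd]

section
variable {α β p q k : ℝ}

lemma H_deriv (hα : 0 < α) (hβ : 0 < β) (hk : 0 < k)
    (hInt : IntegrableOn (fun u : ℝ => ((α * u ^ p + β * u ^ q) ^ k)⁻¹) (Ioi (0:ℝ)))
    {u : ℝ} (hu : 0 < u) :
    HasDerivAt (fun s => ∫ τ in (0:ℝ)..s, ((α * τ ^ p + β * τ ^ q) ^ k)⁻¹)
      (((α * u ^ p + β * u ^ q) ^ k)⁻¹) u := by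
  apply intervalIntegral.integral_hasDerivAt_right
  · exact (intervalIntegrable_iff_integrableOn_Ioc_of_le hu.le).mpr
      (hInt.mono_set Ioc_subset_Ioi_self)
  · exact ContinuousOn.stronglyMeasurableAtFilter isOpen_Ioi (phi_cont hα hβ hk) u hu
  · exact (phi_cont hα hβ hk).continuousAt (Ioi_mem_nhds hu)

lemma H_le (hα : 0 < α) (hβ : 0 < β) (hk : 0 < k)
    (hInt : IntegrableOn (fun u : ℝ => ((α * u ^ p + β * u ^ q) ^ k)⁻¹) (Ioi (0:ℝ)))
    {u : ℝ} (hu : 0 ≤ u) :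
    (∫ τ in (0:ℝ)..u, ((α * τ ^ p + β * τ ^ q) ^ k)⁻¹)
      ≤ ∫ τ in Ioi (0:ℝ), ((α * τ ^ p + β * τ ^ q) ^ k)⁻¹ := by
  rw [intervalIntegral.integral_of_le hu]
  apply setIntegral_mono_set hInt
  · refine (ae_restrict_iff' measurableSet_Ioi).mpr (Filter.Eventually.of_forall ?_)
    intro τ hτ
    have hτ0 : (0:ℝ) < τ := hτ
    positivity
  · exact (Ioc_subset_Ioi_self).eventuallyLE

lemma H_pos (hα : 0 < α) (hβ : 0 < β) (hk : 0 < k)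
    (hInt : IntegrableOn (fun u : ℝ => ((α * u ^ p + β * u ^ q) ^ k)⁻¹) (Ioi (0:ℝ)))
    {u : ℝ} (hu : 0 < u) :
    0 < ∫ τ in (0:ℝ)..u, ((α * τ ^ p + β * τ ^ q) ^ k)⁻¹ := by
  apply intervalIntegral.intervalIntegral_pos_of_pos_on
  · exact (intervalIntegrable_iff_integrableOn_Ioc_of_le hu.le).mpr
      (hInt.mono_set Ioc_subset_Ioi_self)
  · intro τ hτ
    have hτ0 : (0:ℝ) < τ := hτ.1
    positivity
  · exact hu

end

lemma coef_bound {Bu D u lam2 klb gv Tc nn : ℝ} (hBu : 0 < Bu) (hu : 0 < u)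
    (hlam2 : 0 < lam2) (hnn : 0 < nn) (hTc : 0 < Tc) (hgv : 0 < gv)
    (hklb : klb = nn * gv / (lam2 * Tc)) (hVd : D ≤ -2 * klb * (Bu * u)) :
    Bu⁻¹ * (1 / (2 * u) * (lam2 * D / nn)) + gv / Tc ≤ 0 := by
  have e1 : Bu⁻¹ * (1 / (2 * u) * (lam2 * D / nn)) = (lam2 / (2 * nn * u * Bu)) * D := by
    field_simp
    try ring
    try exact Or.inl trivial
  have hcpos : 0 < lam2 / (2 * nn * u * Bu) := by positivity
  have e2 : (lam2 / (2 * nn * u * Bu)) * D ≤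
      (lam2 / (2 * nn * u * Bu)) * (-2 * klb * (Bu * u)) :=
    mul_le_mul_of_nonneg_left hVd hcpos.le
  have e3 : (lam2 / (2 * nn * u * Bu)) * (-2 * klb * (Bu * u)) = - (lam2 * klb / nn) := by
    field_simp
  have e4 : lam2 * klb / nn = gv / Tc := by
    rw [hklb]
    field_simp
  rw [e1]
  linarith

set_option maxHeartbeats 1000000 in
/-- Predefined-time consensus of protocol (7) on a static connected
graph, despite disturbances with Euclidean norm bounded by `L`: if
`κᵢ ≥ n·γ/(λ₂(Q)·T_c)` and `(min κᵢ)·ζ ≥ L`, then consensus is reached before `T_c`.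
Here `lam2` is the smallest nonzero eigenvalue of the Laplacian `Q`. -/
theorem protocolA_predefined_time_consensus_static
    (n : ℕ) (hn : 0 < n)
    (Q : Matrix (Fin n) (Fin n) ℝ)
    (hQsymm : Q.IsSymm)
    (hQpsd : Q.PosSemidef)
    (hQker : ∀ v : Fin n → ℝ, Q.mulVec v = 0 ↔ ∃ c : ℝ, v = fun _ => c)
    (lam2 : ℝ) (hlam2pos : 0 < lam2)
    (hlam2eig : ∃ v : Fin n → ℝ, v ≠ 0 ∧ Q.mulVec v = lam2 • v)
    (hlam2min : ∀ μ : ℝ, μ ≠ 0 → (∃ v : Fin n → ℝ, v ≠ 0 ∧ Q.mulVec v = μ • v) →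
      lam2 ≤ μ)
    (α β p q k : ℝ) (hα : 0 < α) (hβ : 0 < β) (hp : 0 < p) (hq : 0 < q) (hk : 0 < k)
    (hkp : k * p < 1) (hkq : 1 < k * q)
    (Tc : ℝ) (hTc : 0 < Tc) (L : ℝ) (hL : 0 ≤ L) (ζ : ℝ) (hζ : 0 < ζ)
    (κ : Fin n → ℝ)
    (hκ : ∀ i, (n : ℝ) *
        (Real.Gamma ((1 - k * p) / (q - p)) * Real.Gamma ((k * q - 1) / (q - p)) /
          (α ^ k * Real.Gamma k * (q - p)) * (α / β) ^ ((1 - k * p) / (q - p))) /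
        (lam2 * Tc) ≤ κ i)
    (hκζ : ∀ i, L ≤ κ i * ζ)
    (d : ℝ → Fin n → ℝ) (hd : ∀ t, Real.sqrt (d t ⬝ᵥ d t) ≤ L)
    (x : ℝ → Fin n → ℝ)
    (hx : ∀ t, 0 ≤ t →
      HasDerivAt x
        (fun i =>
          κ i * ((α * |-(Q.mulVec (x t) i)| ^ p + β * |-(Q.mulVec (x t) i)| ^ q) ^ k
                  + ζ) * Real.sign (-(Q.mulVec (x t) i)) + d t i) t) :
    ∀ t, Tc ≤ t → ∀ i j, x t i = x t j := by
  classical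
  have hn' : (0:ℝ) < n := Nat.cast_pos.mpr hn
  have hr : 0 < q - p := by nlinarith
  have ha : 0 < (1 - k*p)/(q-p) := div_pos (by linarith) hr
  have hb : 0 < (k*q-1)/(q-p) := div_pos (by linarith) hr
  set γv : ℝ := Real.Gamma ((1 - k * p) / (q - p)) * Real.Gamma ((k * q - 1) / (q - p)) /
      (α ^ k * Real.Gamma k * (q - p)) * (α / β) ^ ((1 - k * p) / (q - p)) with hγv
  have hγpos : 0 < γv := by
    rw [hγv]
    have g1 := Real.Gamma_pos_of_pos ha
    have g2 := Real.Gamma_pos_of_pos hb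
    have g3 := Real.Gamma_pos_of_pos hk
    have g4 : (0:ℝ) < (α/β) ^ ((1 - k*p)/(q-p)) := Real.rpow_pos_of_pos (div_pos hα hβ) _
    have g5 : (0:ℝ) < α ^ k := Real.rpow_pos_of_pos hα _
    positivity
  have hInt : IntegrableOn (fun u : ℝ => ((α * u ^ p + β * u ^ q) ^ k)⁻¹) (Ioi (0:ℝ)) :=
    key_integrable hα hβ hp hq hk hkp hkq
  have hIval : (∫ u in Ioi (0:ℝ), ((α * u ^ p + β * u ^ q) ^ k)⁻¹) = γv := by
    apply key_integral hα hβ hp hq hk hkp hkq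
    have hab : (1 - k*p)/(q-p) + (k*q - 1)/(q-p) = k := by field_simp; ring
    have hra : (q-p) * ((1 - k*p)/(q-p)) = 1 - k*p := by field_simp
    exact step_A hp hq hk hr hab hra (betaIoi_eq ha hb (realBeta_eq ha hb))
  set klb : ℝ := (n : ℝ) * γv / (lam2 * Tc) with hklb
  have hklbpos : 0 < klb := by
    rw [hklb]; positivity
  have hκ' : ∀ i, klb ≤ κ i := hκ
  have hκpos : ∀ i, 0 < κ i := fun i => lt_of_lt_of_le hklbpos (hκ' i)
  set F : ℝ → Fin n → ℝ := fun t => (fun i =>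
      κ i * ((α * |-(Q.mulVec (x t) i)| ^ p + β * |-(Q.mulVec (x t) i)| ^ q) ^ k
        + ζ) * Real.sign (-(Q.mulVec (x t) i)) + d t i) with hF
  set V : ℝ → ℝ := fun s => (x s) ⬝ᵥ Q.mulVec (x s) with hV
  set uf : ℝ → ℝ := fun s => Real.sqrt (lam2 * V s / n) with huf
  have hVnonneg : ∀ s, 0 ≤ V s := by
    intro s
    have h := hQpsd.dotProduct_mulVec_nonneg (x s)
    simpa using h
  have hVD : ∀ t, 0 ≤ t → HasDerivAt V (2 * ((Q.mulVec (x t)) ⬝ᵥ F t)) t :=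
    fun t ht => hasDerivAt_quadForm Q hQsymm x (F t) t (hx t ht)
  have hdotb : ∀ t, (Q.mulVec (x t)) ⬝ᵥ F t ≤
      - ∑ i, κ i * ((α * |Q.mulVec (x t) i| ^ p + β * |Q.mulVec (x t) i| ^ q) ^ k)
        * |Q.mulVec (x t) i| :=
    fun t => dot_bound (Q.mulVec (x t)) (d t) κ hκζ hκpos hζ (hd t)
  have hsum_nonneg : ∀ t, 0 ≤ ∑ i, κ i *
      ((α * |Q.mulVec (x t) i| ^ p + β * |Q.mulVec (x t) i| ^ q) ^ k) * |Q.mulVec (x t) i| := by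
    intro t
    apply Finset.sum_nonneg
    intro i _
    exact mul_nonneg (mul_nonneg (hκpos i).le
      (Real.rpow_nonneg (by positivity) _)) (abs_nonneg _)
  have hVanti : AntitoneOn V (Ici (0:ℝ)) := by
    apply antitoneOn_of_deriv_nonpos (convex_Ici 0)
    · exact fun t ht => ((hVD t ht).continuousAt).continuousWithinAt
    · intro t ht
      rw [interior_Ici] at ht
      exact ((hVD t (le_of_lt ht)).differentiableAt).differentiableWithinAt
    · intro t ht
      rw [interior_Ici] at ht
      rw [(hVD t (le_of_lt ht)).deriv]
      have h1 := hdotb t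
      have h2 := hsum_nonneg t
      linarith
  -- key derivative bound when needed
  have hVd_le : ∀ t, 0 ≤ t →
      2 * ((Q.mulVec (x t)) ⬝ᵥ F t) ≤
        -2 * klb * ((α * uf t ^ p + β * uf t ^ q) ^ k * uf t) := by
    intro t ht
    set w : Fin n → ℝ := Q.mulVec (x t) with hw
    obtain ⟨i0, -, hi0⟩ := Finset.exists_max_image Finset.univ (fun i => |w i|)
      ⟨⟨0, hn⟩, Finset.mem_univ _⟩
    have hmax : ∀ i, |w i| ≤ |w i0| := fun i => hi0 i (Finset.mem_univ i)
    have hww_le : w ⬝ᵥ w ≤ (n : ℝ) * |w i0| ^ 2 := by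
      rw [dotProduct]
      calc (∑ i, w i * w i) ≤ ∑ _i : Fin n, |w i0| ^ 2 := by
            apply Finset.sum_le_sum
            intro i _
            have h1 : w i * w i = |w i| ^ 2 := by rw [sq_abs]; ring
            rw [h1]
            exact pow_le_pow_left₀ (abs_nonneg _) (hmax i) 2
        _ = (n : ℝ) * |w i0| ^ 2 := by
            rw [Finset.sum_const, Finset.card_univ, Fintype.card_fin, nsmul_eq_mul]
    have hspec := spectral_ineq hQpsd hlam2pos hlam2min (x t)
    have hu_le : uf t ≤ |w i0| := by
      have h1 : lam2 * V t / n ≤ |w i0| ^ 2 := by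
        rw [div_le_iff₀ hn']
        calc lam2 * V t ≤ w ⬝ᵥ w := hspec
          _ ≤ (n:ℝ) * |w i0| ^ 2 := hww_le
          _ = |w i0| ^ 2 * n := by ring
      calc uf t = Real.sqrt (lam2 * V t / n) := rfl
        _ ≤ Real.sqrt (|w i0| ^ 2) := Real.sqrt_le_sqrt h1
        _ = |w i0| := Real.sqrt_sq (abs_nonneg _)
    have hu0 : 0 ≤ uf t := Real.sqrt_nonneg _
    have hψmono : (α * uf t ^ p + β * uf t ^ q) ^ k * uf t ≤
        (α * |w i0| ^ p + β * |w i0| ^ q) ^ k * |w i0| := by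
      have hBle : (α * uf t ^ p + β * uf t ^ q) ^ k ≤ (α * |w i0| ^ p + β * |w i0| ^ q) ^ k := by
        apply Real.rpow_le_rpow (by positivity) ?_ hk.le
        have e1 : uf t ^ p ≤ |w i0| ^ p := Real.rpow_le_rpow hu0 hu_le hp.le
        have e2 : uf t ^ q ≤ |w i0| ^ q := Real.rpow_le_rpow hu0 hu_le hq.le
        have := hα.le
        have := hβ.le
        nlinarith
      exact mul_le_mul hBle hu_le hu0 (Real.rpow_nonneg (by positivity) _)
    have hsum_ge : klb * ((α * |w i0| ^ p + β * |w i0| ^ q) ^ k * |w i0|) ≤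
        ∑ i, κ i * ((α * |w i| ^ p + β * |w i| ^ q) ^ k) * |w i| := by
      have hterm : klb * ((α * |w i0| ^ p + β * |w i0| ^ q) ^ k * |w i0|) ≤
          κ i0 * ((α * |w i0| ^ p + β * |w i0| ^ q) ^ k) * |w i0| := by
        have h1 : klb * ((α * |w i0| ^ p + β * |w i0| ^ q) ^ k * |w i0|) =
            klb * ((α * |w i0| ^ p + β * |w i0| ^ q) ^ k) * |w i0| := by ring
        rw [h1]
        apply mul_le_mul_of_nonneg_right _ (abs_nonneg _)
        exact mul_le_mul_of_nonneg_right (hκ' i0) (Real.rpow_nonneg (by positivity) _)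
      refine hterm.trans ?_
      apply Finset.single_le_sum (f := fun i => κ i * ((α * |w i| ^ p + β * |w i| ^ q) ^ k) * |w i|)
        (fun i _ => mul_nonneg (mul_nonneg (hκpos i).le (Real.rpow_nonneg (by positivity) _))
          (abs_nonneg _)) (Finset.mem_univ i0)
    have hchain : klb * ((α * uf t ^ p + β * uf t ^ q) ^ k * uf t) ≤
        ∑ i, κ i * ((α * |w i| ^ p + β * |w i| ^ q) ^ k) * |w i| :=
      le_trans (mul_le_mul_of_nonneg_left hψmono hklbpos.le) hsum_ge
    have hd1 := hdotb t
    calc 2 * (w ⬝ᵥ F t) ≤ 2 * (- ∑ i, κ i * ((α * |w i| ^ p + β * |w i| ^ q) ^ k) * |w i|) := by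
          have := hdotb t
          linarith
      _ ≤ 2 * (-(klb * ((α * uf t ^ p + β * uf t ^ q) ^ k * uf t))) := by linarith
      _ = -2 * klb * ((α * uf t ^ p + β * uf t ^ q) ^ k * uf t) := by ring
  -- main contradiction: V Tc ≤ 0
  have hVTc : V Tc ≤ 0 := by
    by_contra hcon
    push_neg at hcon
    have hVpos : ∀ s ∈ Icc (0:ℝ) Tc, 0 < V s := by
      intro s hs
      exact lt_of_lt_of_le hcon (hVanti hs.1 (mem_Ici.mpr hTc.le) hs.2)
    have hinpos : ∀ s ∈ Icc (0:ℝ) Tc, 0 < lam2 * V s / n := by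
      intro s hs
      have := hVpos s hs
      positivity
    have hupos : ∀ s ∈ Icc (0:ℝ) Tc, 0 < uf s := by
      intro s hs
      exact Real.sqrt_pos.mpr (hinpos s hs)
    set W : ℝ → ℝ := fun s =>
      (∫ τ in (0:ℝ)..(uf s), ((α * τ ^ p + β * τ ^ q) ^ k)⁻¹) + γv / Tc * s with hW
    have hWD : ∀ s ∈ Icc (0:ℝ) Tc, HasDerivAt W
        ((((α * uf s ^ p + β * uf s ^ q) ^ k)⁻¹ *
          (1 / (2 * Real.sqrt (lam2 * V s / n)) * (lam2 * (2 * ((Q.mulVec (x s)) ⬝ᵥ F s)) / n)))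
          + γv / Tc) s := by
      intro s hs
      have h1 : HasDerivAt (fun τ => lam2 * V τ / n)
          (lam2 * (2 * ((Q.mulVec (x s)) ⬝ᵥ F s)) / n) s :=
        ((hVD s hs.1).const_mul lam2).div_const n
      have h2 : HasDerivAt (fun τ => Real.sqrt (lam2 * V τ / n))
          (1 / (2 * Real.sqrt (lam2 * V s / n)) * (lam2 * (2 * ((Q.mulVec (x s)) ⬝ᵥ F s)) / n)) s :=
        (Real.hasDerivAt_sqrt (ne_of_gt (hinpos s hs))).comp s h1
      have h3 : HasDerivAt (fun y => ∫ τ in (0:ℝ)..y, ((α * τ ^ p + β * τ ^ q) ^ k)⁻¹)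
          (((α * uf s ^ p + β * uf s ^ q) ^ k)⁻¹) (uf s) :=
        H_deriv hα hβ hk hInt (hupos s hs)
      have h4 := h3.comp s h2
      have h5 : HasDerivAt (fun y : ℝ => γv / Tc * y) (γv / Tc) s := by
        simpa using (hasDerivAt_id s).const_mul (γv / Tc)
      exact h4.add h5
    have hder_le : ∀ s ∈ Icc (0:ℝ) Tc,
        ((((α * uf s ^ p + β * uf s ^ q) ^ k)⁻¹ *
          (1 / (2 * Real.sqrt (lam2 * V s / n)) * (lam2 * (2 * ((Q.mulVec (x s)) ⬝ᵥ F s)) / n)))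
          + γv / Tc) ≤ 0 := by
      intro s hs
      have hu := hupos s hs
      have hsq : Real.sqrt (lam2 * V s / n) = uf s := rfl
      have hBupos : 0 < (α * uf s ^ p + β * uf s ^ q) ^ k := by positivity
      have hVd := hVd_le s hs.1
      rw [hsq]
      exact coef_bound hBupos hu hlam2pos hn' hTc hγpos hklb hVd
    have hWanti : AntitoneOn W (Icc (0:ℝ) Tc) := by
      apply antitoneOn_of_deriv_nonpos (convex_Icc 0 Tc)
      · exact fun s hs => ((hWD s hs).continuousAt).continuousWithinAt
      · intro s hs
        rw [interior_Icc] at hs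
        exact ((hWD s (Ioo_subset_Icc_self hs)).differentiableAt).differentiableWithinAt
      · intro s hs
        rw [interior_Icc] at hs
        rw [(hWD s (Ioo_subset_Icc_self hs)).deriv]
        exact hder_le s (Ioo_subset_Icc_self hs)
    have hW0 : W 0 ≤ γv := by
      rw [hW]
      simp only [mul_zero, add_zero]
      calc (∫ τ in (0:ℝ)..(uf 0), ((α * τ ^ p + β * τ ^ q) ^ k)⁻¹)
          ≤ ∫ τ in Ioi (0:ℝ), ((α * τ ^ p + β * τ ^ q) ^ k)⁻¹ :=
            H_le hα hβ hk hInt (Real.sqrt_nonneg _)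
        _ = γv := hIval
    have hWTc : W Tc = (∫ τ in (0:ℝ)..(uf Tc), ((α * τ ^ p + β * τ ^ q) ^ k)⁻¹) + γv := by
      rw [hW]
      congr 1
      field_simp
    have hHTcpos : 0 < ∫ τ in (0:ℝ)..(uf Tc), ((α * τ ^ p + β * τ ^ q) ^ k)⁻¹ :=
      H_pos hα hβ hk hInt (hupos Tc ⟨hTc.le, le_rfl⟩)
    have hmono := hWanti (left_mem_Icc.mpr hTc.le) (right_mem_Icc.mpr hTc.le) hTc.le
    rw [hWTc] at hmono
    exact absurd ((lt_add_of_pos_left γv hHTcpos).trans_le (hmono.trans hW0)) (lt_irrefl γv)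
  -- conclude
  intro t ht i j
  have hVt0 : V t = 0 := by
    have h1 : V t ≤ V Tc := hVanti (mem_Ici.mpr hTc.le) (mem_Ici.mpr (hTc.le.trans ht)) ht
    have h2 := hVnonneg t
    linarith [hVTc]
  have hQx : Q.mulVec (x t) = 0 := by
    apply (Matrix.PosSemidef.dotProduct_mulVec_zero_iff hQpsd (x t)).mp
    simpa using hVt0
  obtain ⟨c, hc⟩ := (hQker (x t)).mp hQx
  rw [hc]
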